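/- arXiv:1101.2819 — 3 statements merged into one kernel-verified Lean document; each statement's English description precedes it below -/
import Mathlib

section
/- For every set K of sanitization functions such that each function in K has ε-differential privacy, the automaton M_ex1(K) has (2t·ε)-differential noninterference. -/
open scoped Classical

/-- A sanitization function: for each data set (finite multiset of data points)
a discrete probability distribution over responses. -/
structure SanFn (D R : Type) where
  f : Multiset D → R → ℝ
  nonneg : ∀ B r, 0 ≤ f B r
  total : ∀ B, (∑' r : R, f B r) = 1

/-- Two multisets differ on at most one element. -/
def MSAdj {D : Type} (B₁ B₂ : Multiset D) : Prop :=
  B₁ = B₂ ∨ ∃ d : D, d ::ₘ B₁ = B₂ ∨ d ::ₘ B₂ = B₁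

/-- `ε`-differential privacy of a sanitization function. -/
def HasDP {D R : Type} (ε : ℝ) (k : SanFn D R) : Prop :=
  ∀ B₁ B₂ : Multiset D, MSAdj B₁ B₂ → ∀ r : R, k.f B₁ r ≤ Real.exp ε * k.f B₂ r

/-- The (`H`-disabled) states of the automaton `M_ex1(K)`:
`pc16 = false` corresponds to the input-accepting state at line 08 and
`pc16 = true` to the output state at line 16; `B` is the array of `t` slots of
data points, `n` the array of slot sizes, `c` the current slot, `y` the last input,
`r` the pending response, and `k` (represented by its query) the chosen
sanitization function. -/
structure ExState (D Q R : Type) (t : ℕ) where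
  pc16 : Bool
  B : Fin t → Multiset D
  n : Fin t → ℕ
  c : Fin t
  y : D ⊕ Q
  r : R
  k : Q

variable {D Q R : Type}

/-- Effect of receiving the data point `d` at line 08 (Add if the current slot has
fewer than `v` data points, Drop otherwise). -/
def addOrDrop {t : ℕ} (v : ℕ) (s : ExState D Q R t) (d : D) : ExState D Q R t :=
  if s.n s.c < v then
    { pc16 := false, B := Function.update s.B s.c (d ::ₘ s.B s.c),
      n := Function.update s.n s.c (s.n s.c + 1), c := s.c, y := Sum.inl d,
      r := s.r, k := s.k }
  else
    { s with pc16 := false, y := Sum.inl d }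

/-- State at line 16 reached after answering query `q` with response `r'`. -/
def answerState {t : ℕ} (s : ExState D Q R t) (q : Q) (r' : R) : ExState D Q R t :=
  { pc16 := true, B := s.B, n := s.n, c := s.c, y := Sum.inr q, r := r', k := q }

/-- Effect of outputting the pending response: advance the current slot cyclically
and delete the old data in the new current slot. -/
def advanceState {t : ℕ} [NeZero t] (s : ExState D Q R t) : ExState D Q R t :=
  { pc16 := false, B := Function.update s.B (s.c + 1) 0,
    n := Function.update s.n (s.c + 1) 0, c := s.c + 1, y := s.y, r := s.r, k := s.k }

/-- The union of all the data points stored in all the slots. -/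
def totalB {t : ℕ} (s : ExState D Q R t) : Multiset D :=
  ∑ j : Fin t, s.B j

/-- The observable prefix probability `Pr[⟦M_ex1(K)⟧(i⃗)↾E ⊒ e⃗]`, defined directly
from the extended transitions of `M_ex1(K)`. -/
noncomputable def exP {t : ℕ} [NeZero t] (v : ℕ) (κ : Q → SanFn D R) :
    ExState D Q R t → List (D ⊕ Q) → List (Q ⊕ R) → ℝ
  | _, _, [] => 1
  | s, ivec, e :: evec' =>
    if s.pc16 then
      match e with
      | Sum.inr r' => if r' = s.r then exP v κ (advanceState s) ivec evec' else 0
      | Sum.inl _ => 0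
    else
      match ivec with
      | [] => 0
      | Sum.inl d :: ivec' => exP v κ (addOrDrop v s d) ivec' (e :: evec')
      | Sum.inr q :: ivec' =>
        match e with
        | Sum.inl q' =>
          if q' = q then
            ∑' r' : R, (κ q).f (totalB s) r' * exP v κ (answerState s q r') ivec' evec'
          else 0
        | Sum.inr _ => 0
  termination_by s ivec evec => ivec.length + evec.length
  decreasing_by all_goals simp_wf <;> omega

/-- The elements of `T` having no strict prefix in `T`. -/
def minimalPrefixes {X : Type*} (T : Set (List X)) : Set (List X) :=
  {e | e ∈ T ∧ ¬ ∃ e' ∈ T, e' <+: e ∧ e' ≠ e}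

/-- `Pr[⟦M_ex1(K)⟧(i⃗)↾E ⊒ T]` for a set `T` of observable sequences. -/
noncomputable def exPSet {t : ℕ} [NeZero t] (v : ℕ) (κ : Q → SanFn D R)
    (s : ExState D Q R t) (ivec : List (D ⊕ Q)) (T : Set (List (Q ⊕ R))) : ℝ :=
  ∑' e : minimalPrefixes T, exP v κ s ivec e.1

/-- `Δ(i⃗₁,i⃗₂) ≤ 1`: the input sequences are equal or one is obtained from the
other by inserting a single data point. -/
def AdjOneIn {D Q : Type} (i₁ i₂ : List (D ⊕ Q)) : Prop :=
  i₁ = i₂ ∨ ∃ (pre post : List (D ⊕ Q)) (d : D),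
    (i₁ = pre ++ Sum.inl d :: post ∧ i₂ = pre ++ post) ∨
    (i₂ = pre ++ Sum.inl d :: post ∧ i₁ = pre ++ post)

/-- The initial state `s₀` of `M_ex1(K)`. -/
def initState {t : ℕ} [NeZero t] (y₀ : D ⊕ Q) (r₀ : R) (k₀ : Q) : ExState D Q R t :=
  { pc16 := false, B := fun _ => 0, n := fun _ => 0, c := 0, y := y₀, r := r₀, k := k₀ }

open Fin.NatCast Fin.CommRing

section
variable {D Q R : Type} {t : ℕ} [NeZero t] (v : ℕ) (κ : Q → SanFn D R)

lemma exP_nil (s : ExState D Q R t) (i : List (D ⊕ Q)) : exP v κ s i [] = 1 := by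
  rw [exP.eq_def]

lemma exP_true_inr (s : ExState D Q R t) (h : s.pc16 = true) (i : List (D ⊕ Q))
    (r' : R) (e' : List (Q ⊕ R)) :
    exP v κ s i (Sum.inr r' :: e') =
      if r' = s.r then exP v κ (advanceState s) i e' else 0 := by
  rw [exP.eq_def]; simp [h]

lemma exP_true_inl (s : ExState D Q R t) (h : s.pc16 = true) (i : List (D ⊕ Q))
    (q' : Q) (e' : List (Q ⊕ R)) :
    exP v κ s i (Sum.inl q' :: e') = 0 := by
  rw [exP.eq_def]; simp [h]

lemma exP_false_nilin (s : ExState D Q R t) (h : s.pc16 = false)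
    (e : Q ⊕ R) (e' : List (Q ⊕ R)) :
    exP v κ s [] (e :: e') = 0 := by
  rw [exP.eq_def]; simp [h]

lemma exP_false_inl (s : ExState D Q R t) (h : s.pc16 = false) (d : D)
    (i' : List (D ⊕ Q)) (e : Q ⊕ R) (e' : List (Q ⊕ R)) :
    exP v κ s (Sum.inl d :: i') (e :: e') = exP v κ (addOrDrop v s d) i' (e :: e') := by
  rw [exP.eq_def]; simp [h]

lemma exP_false_inrq (s : ExState D Q R t) (h : s.pc16 = false) (q q' : Q)
    (i' : List (D ⊕ Q)) (e' : List (Q ⊕ R)) :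
    exP v κ s (Sum.inr q :: i') (Sum.inl q' :: e') =
      if q' = q then
        ∑' r' : R, (κ q).f (totalB s) r' * exP v κ (answerState s q r') i' e'
      else 0 := by
  rw [exP.eq_def]; simp [h]

lemma exP_false_inrr (s : ExState D Q R t) (h : s.pc16 = false) (q : Q) (r' : R)
    (i' : List (D ⊕ Q)) (e' : List (Q ⊕ R)) :
    exP v κ s (Sum.inr q :: i') (Sum.inr r' :: e') = 0 := by
  rw [exP.eq_def]; simp [h]

end

section
variable {D Q R : Type} {t : ℕ} [NeZero t] {v : ℕ} {κ : Q → SanFn D R}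

lemma SanFn.summable (k : SanFn D R) (B : Multiset D) : Summable (k.f B) := by
  by_contra h
  have := tsum_eq_zero_of_not_summable h
  rw [k.total B] at this
  norm_num at this

lemma exP_nonneg : ∀ (N : ℕ) (i : List (D ⊕ Q)) (e : List (Q ⊕ R)),
    i.length + e.length ≤ N → ∀ s : ExState D Q R t, 0 ≤ exP v κ s i e := by
  intro N
  induction N with
  | zero =>
    intro i e hlen s
    obtain rfl : e = [] := by
      cases e with
      | nil => rfl
      | cons a b => simp at hlen
    rw [exP_nil]; norm_num
  | succ n ih =>
    intro i e hlen s
    cases e with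
    | nil => rw [exP_nil]; norm_num
    | cons x e' =>
      cases hpc : s.pc16 with
      | true =>
        cases x with
        | inl q' => rw [exP_true_inl v κ s hpc]
        | inr r' =>
          rw [exP_true_inr v κ s hpc]
          split
          · exact ih i e' (by simp at hlen ⊢; omega) _
          · exact le_rfl
      | false =>
        cases i with
        | nil => rw [exP_false_nilin v κ s hpc]
        | cons y i' =>
          cases y with
          | inl d =>
            rw [exP_false_inl v κ s hpc]
            exact ih i' (x :: e') (by simp at hlen ⊢; omega) _
          | inr q =>
            cases x with
            | inl q' =>
              rw [exP_false_inrq v κ s hpc]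
              split
              · apply tsum_nonneg
                intro r'
                exact mul_nonneg ((κ q).nonneg _ _)
                  (ih i' e' (by simp at hlen ⊢; omega) _)
              · exact le_rfl
            | inr r' => rw [exP_false_inrr v κ s hpc]

end

section
variable {D Q R : Type} {t : ℕ} [NeZero t] {v : ℕ} {κ : Q → SanFn D R}

/-- helper: the filter of lists starting with `x`, with tail taken. -/
noncomputable def tailSet (F : Finset (List (Q ⊕ R))) (x : Q ⊕ R) : Finset (List (Q ⊕ R)) :=
  (F.filter fun e => ∃ l, e = x :: l).image List.tail

lemma mem_tailSet {F : Finset (List (Q ⊕ R))} {x : Q ⊕ R} {l : List (Q ⊕ R)} :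
    l ∈ tailSet F x ↔ x :: l ∈ F := by
  unfold tailSet
  simp only [Finset.mem_image, Finset.mem_filter]
  constructor
  · rintro ⟨e, ⟨he, l', rfl⟩, rfl⟩; simpa using he
  · intro h; exact ⟨x :: l, ⟨h, l, rfl⟩, rfl⟩

lemma sum_tailSet {M : Type} [AddCommMonoid M] {F : Finset (List (Q ⊕ R))} {x : Q ⊕ R}
    (g : List (Q ⊕ R) → M) :
    ∑ e ∈ tailSet F x, g e = ∑ e ∈ F.filter fun e => ∃ l, e = x :: l, g e.tail := by
  unfold tailSet
  rw [Finset.sum_image]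
  rintro e₁ he₁ e₂ he₂ h
  obtain ⟨-, l₁, rfl⟩ := Finset.mem_filter.mp he₁
  obtain ⟨-, l₂, rfl⟩ := Finset.mem_filter.mp he₂
  simpa using h

lemma tailSet_len {F : Finset (List (Q ⊕ R))} (x : Q ⊕ R) :
    ∑ e ∈ tailSet F x, (e.length + 1) ≤ ∑ e ∈ F, e.length := by
  rw [sum_tailSet]
  refine le_trans (le_of_eq (Finset.sum_congr rfl ?_))
    (Finset.sum_le_sum_of_subset (Finset.filter_subset _ _))
  rintro e he
  obtain ⟨-, l, rfl⟩ := Finset.mem_filter.mp he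
  simp

lemma tailSet_pf {F : Finset (List (Q ⊕ R))}
    (hpf : ∀ e₁ ∈ F, ∀ e₂ ∈ F, e₁ <+: e₂ → e₁ = e₂) (x : Q ⊕ R) :
    ∀ e₁ ∈ tailSet F x, ∀ e₂ ∈ tailSet F x, e₁ <+: e₂ → e₁ = e₂ := by
  intro e₁ h₁ e₂ h₂ hp
  have := hpf _ (mem_tailSet.mp h₁) _ (mem_tailSet.mp h₂) (List.cons_prefix_cons.mpr ⟨rfl, hp⟩)
  simpa using this

lemma pf_sum_le_one : ∀ (N : ℕ) (i : List (D ⊕ Q)) (F : Finset (List (Q ⊕ R))),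
    i.length + ∑ e ∈ F, e.length ≤ N →
    (∀ e₁ ∈ F, ∀ e₂ ∈ F, e₁ <+: e₂ → e₁ = e₂) →
    ∀ s : ExState D Q R t, ∑ e ∈ F, exP v κ s i e ≤ 1 := by
  intro N
  induction N with
  | zero =>
    intro i F hlen hpf s
    rcases Finset.eq_empty_or_nonempty F with rfl | ⟨e₀, he₀⟩
    · simp
    · have : ∀ e ∈ F, e = [] := by
        intro e he
        have h1 : e.length ≤ ∑ e ∈ F, e.length := Finset.single_le_sum (by intros; positivity) he
        have : e.length = 0 := by omega
        exact List.length_eq_zero_iff.mp this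
      have hF : F = {[]} := by
        apply Finset.eq_singleton_iff_unique_mem.mpr
        exact ⟨(this e₀ he₀) ▸ he₀, this⟩
      rw [hF, Finset.sum_singleton, exP_nil]
  | succ n ih =>
    intro i F hlen hpf s
    rcases Finset.eq_empty_or_nonempty F with rfl | ⟨e₀, he₀⟩
    · simp
    by_cases hnil : ([] : List (Q ⊕ R)) ∈ F
    · have hF : F = {[]} := by
        apply Finset.eq_singleton_iff_unique_mem.mpr
        exact ⟨hnil, fun e he => (hpf [] hnil e he List.nil_prefix).symm⟩
      rw [hF, Finset.sum_singleton, exP_nil]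
    -- all elements nonempty
    have hne : ∀ e ∈ F, ∃ x l, e = x :: l := by
      intro e he
      cases e with
      | nil => exact absurd he hnil
      | cons x l => exact ⟨x, l, rfl⟩
    cases hpc : s.pc16 with
    | true =>
      have key : ∑ e ∈ F, exP v κ s i e
          = ∑ e ∈ tailSet F (Sum.inr s.r), exP v κ (advanceState s) i e := by
        rw [sum_tailSet]
        rw [← Finset.sum_filter_of_ne (p := fun e => ∃ l, e = Sum.inr s.r :: l)]
        · apply Finset.sum_congr rfl
          rintro e he
          obtain ⟨-, l, rfl⟩ := Finset.mem_filter.mp he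
          rw [exP_true_inr v κ s hpc, if_pos rfl]
          rfl
        · intro e he hne0
          obtain ⟨x, l, rfl⟩ := hne e he
          cases x with
          | inl q' => rw [exP_true_inl v κ s hpc] at hne0; exact absurd rfl hne0
          | inr r' =>
            rw [exP_true_inr v κ s hpc] at hne0
            rcases eq_or_ne r' s.r with rfl | hr
            · exact ⟨l, rfl⟩
            · rw [if_neg hr] at hne0; exact absurd rfl hne0
      rw [key]
      rcases Finset.eq_empty_or_nonempty (tailSet F (Sum.inr s.r)) with h' | ⟨e', he'⟩
      · rw [h']; simp
      apply ih
      · have h1 := tailSet_len (F := F) (Sum.inr s.r)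
        have h2 : e'.length + 1 ≤ ∑ e ∈ tailSet F (Sum.inr s.r), (e.length + 1) :=
          Finset.single_le_sum (f := fun e => e.length + 1) (by intros; positivity) he'
        have h3 : ∑ e ∈ tailSet F (Sum.inr s.r), e.length + 1
            ≤ ∑ e ∈ tailSet F (Sum.inr s.r), (e.length + 1) := by
          rw [Finset.sum_add_distrib]
          simp only [Finset.sum_const, smul_eq_mul, mul_one]
          have : 1 ≤ (tailSet F (Sum.inr s.r)).card := Finset.card_pos.mpr ⟨e', he'⟩
          omega
        omega
      · exact tailSet_pf hpf _
    | false =>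
      cases i with
      | nil =>
        have : ∀ e ∈ F, exP v κ s [] e = 0 := by
          intro e he
          obtain ⟨x, l, rfl⟩ := hne e he
          exact exP_false_nilin v κ s hpc x l
        rw [Finset.sum_congr rfl this]; simp
      | cons y i' =>
        cases y with
        | inl d =>
          have : ∀ e ∈ F, exP v κ s (Sum.inl d :: i') e = exP v κ (addOrDrop v s d) i' e := by
            intro e he
            obtain ⟨x, l, rfl⟩ := hne e he
            exact exP_false_inl v κ s hpc d i' x l
          rw [Finset.sum_congr rfl this]
          apply ih
          · simp at hlen ⊢; omega
          · exact hpf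
        | inr q =>
          -- query case
          have hmes : ∀ G : Finset (List (Q ⊕ R)), G ⊆ tailSet F (Sum.inl q) →
              i'.length + ∑ e ∈ G, e.length ≤ n := by
            intro G hG
            have h1 : ∑ e ∈ G, e.length ≤ ∑ e ∈ tailSet F (Sum.inl q), e.length :=
              Finset.sum_le_sum_of_subset hG
            have h2 : ∑ e ∈ tailSet F (Sum.inl q), e.length
                ≤ ∑ e ∈ tailSet F (Sum.inl q), (e.length + 1) :=
              Finset.sum_le_sum (by intros; omega)
            have h3 := tailSet_len (F := F) (Sum.inl q)
            simp at hlen; omega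
          have hPle : ∀ (r' : R) (e' : List (Q ⊕ R)), e' ∈ tailSet F (Sum.inl q) →
              exP v κ (answerState s q r') i' e' ≤ 1 := by
            intro r' e' he'
            have := ih i' {e'} (by
              have := hmes {e'} (Finset.singleton_subset_iff.mpr he')
              simpa using this) (by simp) (answerState s q r')
            simpa using this
          have hsummable : ∀ e' ∈ tailSet F (Sum.inl q),
              Summable (fun r' : R => (κ q).f (totalB s) r'
                * exP v κ (answerState s q r') i' e') := by
            intro e' he'
            apply Summable.of_nonneg_of_le
              (fun r' => mul_nonneg ((κ q).nonneg _ _)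
                (exP_nonneg (i'.length + e'.length) i' e' le_rfl _))
              (fun r' => mul_le_of_le_one_right ((κ q).nonneg _ _) (hPle r' e' he'))
              ((κ q).summable _)
          have key : ∑ e ∈ F, exP v κ s (Sum.inr q :: i') e
              = ∑' r' : R, (κ q).f (totalB s) r'
                  * ∑ e' ∈ tailSet F (Sum.inl q), exP v κ (answerState s q r') i' e' := by
            rw [← Finset.sum_filter_of_ne (p := fun e => ∃ l, e = Sum.inl q :: l)]
            · have step : ∀ e ∈ F.filter (fun e => ∃ l, e = Sum.inl q :: l),
                  exP v κ s (Sum.inr q :: i') e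
                  = (fun e' => ∑' r' : R, (κ q).f (totalB s) r'
                      * exP v κ (answerState s q r') i' e') e.tail := by
                rintro e he
                obtain ⟨-, l, rfl⟩ := Finset.mem_filter.mp he
                simp only [List.tail_cons]
                rw [exP_false_inrq v κ s hpc, if_pos rfl]
              rw [(Finset.sum_congr rfl step).trans (sum_tailSet (F := F) (x := Sum.inl q) (fun e' => ∑' (r' : R), (κ q).f (totalB s) r' * exP v κ (answerState s q r') i' e')).symm]
              rw [← Summable.tsum_finsetSum (fun e' he' => hsummable e' he')]
              congr 1
              funext r'
              rw [Finset.mul_sum]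
            · intro e he hne0
              obtain ⟨x, l, rfl⟩ := hne e he
              cases x with
              | inr r' => rw [exP_false_inrr v κ s hpc] at hne0; exact absurd rfl hne0
              | inl q' =>
                rcases eq_or_ne q' q with rfl | hq
                · exact ⟨l, rfl⟩
                · rw [exP_false_inrq v κ s hpc, if_neg hq] at hne0; exact absurd rfl hne0
          rw [key]
          have hS : ∀ r' : R, ∑ e' ∈ tailSet F (Sum.inl q),
              exP v κ (answerState s q r') i' e' ≤ 1 := by
            intro r'
            exact ih i' _ (hmes _ (subset_refl _)) (tailSet_pf hpf _) _
          have hS0 : ∀ r' : R, 0 ≤ ∑ e' ∈ tailSet F (Sum.inl q),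
              exP v κ (answerState s q r') i' e' := by
            intro r'
            exact Finset.sum_nonneg fun e' _ =>
              exP_nonneg (i'.length + e'.length) i' e' le_rfl _
          calc ∑' r' : R, (κ q).f (totalB s) r'
                  * ∑ e' ∈ tailSet F (Sum.inl q), exP v κ (answerState s q r') i' e'
              ≤ ∑' r' : R, (κ q).f (totalB s) r' := by
                apply Summable.tsum_le_tsum
                · intro r'
                  exact mul_le_of_le_one_right ((κ q).nonneg _ _) (hS r')
                · apply Summable.of_nonneg_of_le
                    (fun r' => mul_nonneg ((κ q).nonneg _ _) (hS0 r'))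
                    (fun r' => mul_le_of_le_one_right ((κ q).nonneg _ _) (hS r'))
                    ((κ q).summable _)
                · exact (κ q).summable _
            _ = 1 := (κ q).total _

lemma exP_le_one (s : ExState D Q R t) (i : List (D ⊕ Q)) (e : List (Q ⊕ R)) :
    exP v κ s i e ≤ 1 := by
  have := pf_sum_le_one (v := v) (κ := κ) (i.length + ∑ e' ∈ ({e} : Finset (List (Q ⊕ R))), e'.length) i {e}
    le_rfl (by simp) s
  simpa using this

lemma summable_mul (k : SanFn D R) (B : Multiset D) (g : R → ExState D Q R t)
    (i : List (D ⊕ Q)) (e : List (Q ⊕ R)) :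
    Summable (fun r' : R => k.f B r' * exP v κ (g r') i e) := by
  apply Summable.of_nonneg_of_le
    (fun r' => mul_nonneg (k.nonneg _ _) (exP_nonneg (i.length + e.length) i e le_rfl _))
    (fun r' => mul_le_of_le_one_right (k.nonneg _ _) (exP_le_one _ _ _))
    (k.summable _)

end

section
variable {D Q R : Type} {t : ℕ} [NeZero t] {v : ℕ} {κ : Q → SanFn D R}

/-- Equality of all components of the state that `exP` depends on. -/
def coreEq (s₁ s₂ : ExState D Q R t) : Prop :=
  s₁.pc16 = s₂.pc16 ∧ s₁.B = s₂.B ∧ s₁.n = s₂.n ∧ s₁.c = s₂.c ∧ s₁.r = s₂.r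

lemma coreEq.advance {s₁ s₂ : ExState D Q R t} (h : coreEq s₁ s₂) :
    coreEq (advanceState s₁) (advanceState s₂) := by
  obtain ⟨h1, h2, h3, h4, h5⟩ := h
  exact ⟨rfl, by simp [advanceState, h2, h4], by simp [advanceState, h3, h4], by
    simp [advanceState, h4], h5⟩

lemma coreEq.addOrDrop {s₁ s₂ : ExState D Q R t} (h : coreEq s₁ s₂) (d : D) :
    coreEq (addOrDrop v s₁ d) (addOrDrop v s₂ d) := by
  obtain ⟨h1, h2, h3, h4, h5⟩ := h
  unfold _root_.addOrDrop
  rw [h2, h3, h4]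
  split <;> exact ⟨rfl, by simp [h2, h4], by simp [h3, h4], rfl, h5⟩

lemma coreEq.answer {s₁ s₂ : ExState D Q R t} (h : coreEq s₁ s₂) (q : Q) (r' : R) :
    coreEq (answerState s₁ q r') (answerState s₂ q r') :=
  ⟨rfl, h.2.1, h.2.2.1, h.2.2.2.1, rfl⟩

lemma coreEq.totalB {s₁ s₂ : ExState D Q R t} (h : coreEq s₁ s₂) :
    totalB s₁ = totalB s₂ := by
  unfold _root_.totalB; rw [h.2.1]

lemma exP_coreEq : ∀ (N : ℕ) (i : List (D ⊕ Q)) (e : List (Q ⊕ R)),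
    i.length + e.length ≤ N → ∀ s₁ s₂ : ExState D Q R t, coreEq s₁ s₂ →
    exP v κ s₁ i e = exP v κ s₂ i e := by
  intro N
  induction N with
  | zero =>
    intro i e hlen s₁ s₂ h
    obtain rfl : e = [] := by cases e with
      | nil => rfl
      | cons a b => simp at hlen
    rw [exP_nil, exP_nil]
  | succ n ih =>
    intro i e hlen s₁ s₂ h
    have hpc2 := h.1
    have hr := h.2.2.2.2
    cases e with
    | nil => rw [exP_nil, exP_nil]
    | cons x e' =>
      cases hpc : s₁.pc16 with
      | true =>
        cases x with
        | inl q' => rw [exP_true_inl v κ s₁ hpc, exP_true_inl v κ s₂ (hpc2 ▸ hpc)]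
        | inr r' =>
          rw [exP_true_inr v κ s₁ hpc, exP_true_inr v κ s₂ (hpc2 ▸ hpc), ← hr]
          split
          · exact ih i e' (by simp at hlen ⊢; omega) _ _ h.advance
          · rfl
      | false =>
        cases i with
        | nil => rw [exP_false_nilin v κ s₁ hpc, exP_false_nilin v κ s₂ (hpc2 ▸ hpc)]
        | cons y i' =>
          cases y with
          | inl d =>
            rw [exP_false_inl v κ s₁ hpc, exP_false_inl v κ s₂ (hpc2 ▸ hpc)]
            exact ih i' (x :: e') (by simp at hlen ⊢; omega) _ _ (h.addOrDrop d)
          | inr q =>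
            cases x with
            | inl q' =>
              rw [exP_false_inrq v κ s₁ hpc, exP_false_inrq v κ s₂ (hpc2 ▸ hpc)]
              split
              · rw [h.totalB]
                exact tsum_congr fun r' => by
                  rw [ih i' e' (by simp at hlen ⊢; omega) _ _ (h.answer q r')]
              · rfl
            | inr r' =>
              rw [exP_false_inrr v κ s₁ hpc, exP_false_inrr v κ s₂ (hpc2 ▸ hpc)]

end

section
variable {D Q R : Type} {t : ℕ} [NeZero t] {v : ℕ} {κ : Q → SanFn D R}

/-- Possible differences of the contents of one slot. -/
def SlotDiff (s₁ s₂ : ExState D Q R t) (j : Fin t) : Prop :=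
  (∃ d, s₁.B j = d ::ₘ s₂.B j ∧ s₁.n j = s₂.n j + 1) ∨
  (∃ d, s₂.B j = d ::ₘ s₁.B j ∧ s₂.n j = s₁.n j + 1) ∨
  (∃ B d₁ d₂, s₁.B j = d₁ ::ₘ B ∧ s₂.B j = d₂ ::ₘ B ∧ s₁.n j = s₂.n j)

/-- The relation between the two runs while the inserted data point is still
stored: equal except for one slot `j`, which will be flushed after at most `m`
more answered queries. -/
def DRel (m : ℕ) (s₁ s₂ : ExState D Q R t) : Prop :=
  s₁.pc16 = s₂.pc16 ∧ s₁.c = s₂.c ∧ s₁.r = s₂.r ∧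
  ∃ j : Fin t,
    (∀ i, i ≠ j → s₁.B i = s₂.B i) ∧ (∀ i, i ≠ j → s₁.n i = s₂.n i) ∧
    SlotDiff s₁ s₂ j ∧
    (s₁.pc16 = true → j = s₁.c + 1 + (m : Fin t) ∧ m ≤ t - 1) ∧
    (s₁.pc16 = false → j = s₁.c + (m : Fin t) ∧ 1 ≤ m ∧ m ≤ t)

lemma addOrDrop_pc16 (s : ExState D Q R t) (d : D) : (addOrDrop v s d).pc16 = false := by
  unfold addOrDrop; split <;> rfl

lemma addOrDrop_c (s : ExState D Q R t) (d : D) : (addOrDrop v s d).c = s.c := by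
  unfold addOrDrop; split <;> rfl

lemma addOrDrop_r (s : ExState D Q R t) (d : D) : (addOrDrop v s d).r = s.r := by
  unfold addOrDrop; split <;> rfl

lemma addOrDrop_B_lt {s : ExState D Q R t} (h : s.n s.c < v) (d : D) :
    (addOrDrop v s d).B = Function.update s.B s.c (d ::ₘ s.B s.c) := by
  unfold addOrDrop; rw [if_pos h]

lemma addOrDrop_n_lt {s : ExState D Q R t} (h : s.n s.c < v) (d : D) :
    (addOrDrop v s d).n = Function.update s.n s.c (s.n s.c + 1) := by
  unfold addOrDrop; rw [if_pos h]

lemma addOrDrop_B_ge {s : ExState D Q R t} (h : ¬ s.n s.c < v) (d : D) :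
    (addOrDrop v s d).B = s.B := by
  unfold addOrDrop; rw [if_neg h]

lemma addOrDrop_n_ge {s : ExState D Q R t} (h : ¬ s.n s.c < v) (d : D) :
    (addOrDrop v s d).n = s.n := by
  unfold addOrDrop; rw [if_neg h]

lemma Fin.natCast_ne_zero {m : ℕ} (h1 : 1 ≤ m) (h2 : m ≤ t - 1) : (m : Fin t) ≠ 0 := by
  have ht : 0 < t := Nat.pos_of_ne_zero (NeZero.ne t)
  intro h
  have := congrArg Fin.val h
  rw [Fin.val_natCast] at this
  simp only [Fin.val_zero] at this
  rw [Nat.mod_eq_of_lt (by omega)] at this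
  omega

lemma drel_addOrDrop {m : ℕ} {s₁ s₂ : ExState D Q R t} (h : DRel m s₁ s₂)
    (hpc : s₁.pc16 = false) (d : D) :
    DRel m (addOrDrop v s₁ d) (addOrDrop v s₂ d) := by
  obtain ⟨hpc12, hc, hr, j, hB, hn, hsd, hT, hF⟩ := h
  refine ⟨by rw [addOrDrop_pc16, addOrDrop_pc16], by rw [addOrDrop_c, addOrDrop_c, hc],
    by rw [addOrDrop_r, addOrDrop_r, hr], j, ?_⟩
  have hcondT : (addOrDrop v s₁ d).pc16 = true →
      (j = (addOrDrop v s₁ d).c + 1 + (m : Fin t) ∧ m ≤ t - 1) := by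
    intro hh; rw [addOrDrop_pc16] at hh; exact absurd hh (by simp)
  have hcondF : (addOrDrop v s₁ d).pc16 = false →
      (j = (addOrDrop v s₁ d).c + (m : Fin t) ∧ 1 ≤ m ∧ m ≤ t) := by
    intro _; rw [addOrDrop_c]; exact hF hpc
  by_cases hcj : s₁.c = j
  · -- the current slot is the differing slot
    rcases hsd with ⟨d₀, hBj, hnj⟩ | ⟨d₀, hBj, hnj⟩ | ⟨B, d₁, d₂, hB1, hB2, hn12⟩
    · -- s₁ has one more element
      by_cases h2 : s₂.n s₂.c < v
      · by_cases h1 : s₁.n s₁.c < v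
        · -- both add
          refine ⟨?_, ?_, Or.inl ⟨d₀, ?_, ?_⟩, hcondT, hcondF⟩
          · intro i hij
            rw [addOrDrop_B_lt h1, addOrDrop_B_lt h2, ← hc,
              Function.update_of_ne (hcj ▸ hij), Function.update_of_ne (hcj ▸ hij)]
            exact hB i hij
          · intro i hij
            rw [addOrDrop_n_lt h1, addOrDrop_n_lt h2, ← hc,
              Function.update_of_ne (hcj ▸ hij), Function.update_of_ne (hcj ▸ hij)]
            exact hn i hij
          · rw [addOrDrop_B_lt h1, addOrDrop_B_lt h2, ← hc, ← hcj,
              Function.update_self, Function.update_self, hcj, hBj]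
            exact (Multiset.cons_swap d d₀ _)
          · rw [addOrDrop_n_lt h1, addOrDrop_n_lt h2, ← hc, ← hcj,
              Function.update_self, Function.update_self, hcj, hnj]
        · -- s₁ drops, s₂ adds: now a substitution
          refine ⟨?_, ?_, Or.inr (Or.inr ⟨s₂.B j, d₀, d, ?_, ?_, ?_⟩),
            hcondT, hcondF⟩
          · intro i hij
            rw [addOrDrop_B_ge h1, addOrDrop_B_lt h2, ← hc,
              Function.update_of_ne (hcj ▸ hij)]
            exact hB i hij
          · intro i hij
            rw [addOrDrop_n_ge h1, addOrDrop_n_lt h2, ← hc,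
              Function.update_of_ne (hcj ▸ hij)]
            exact hn i hij
          · rw [addOrDrop_B_ge h1]; exact hBj
          · rw [addOrDrop_B_lt h2, ← hc, ← hcj, Function.update_self, hcj]
          · rw [addOrDrop_n_ge h1, addOrDrop_n_lt h2, ← hc, ← hcj,
              Function.update_self, hcj, hnj]
      · -- s₂ full, hence s₁ full: both drop
        have h1 : ¬ s₁.n s₁.c < v := by
          rw [hc, hcj] at *; omega
        refine ⟨?_, ?_, Or.inl ⟨d₀, ?_, ?_⟩, hcondT, hcondF⟩
        · intro i hij
          rw [addOrDrop_B_ge h1, addOrDrop_B_ge h2]; exact hB i hij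
        · intro i hij
          rw [addOrDrop_n_ge h1, addOrDrop_n_ge h2]; exact hn i hij
        · rw [addOrDrop_B_ge h1, addOrDrop_B_ge h2]; exact hBj
        · rw [addOrDrop_n_ge h1, addOrDrop_n_ge h2]; exact hnj
    · -- s₂ has one more element (symmetric)
      by_cases h1 : s₁.n s₁.c < v
      · by_cases h2 : s₂.n s₂.c < v
        · refine ⟨?_, ?_, Or.inr (Or.inl ⟨d₀, ?_, ?_⟩), hcondT, hcondF⟩
          · intro i hij
            rw [addOrDrop_B_lt h1, addOrDrop_B_lt h2, ← hc,
              Function.update_of_ne (hcj ▸ hij), Function.update_of_ne (hcj ▸ hij)]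
            exact hB i hij
          · intro i hij
            rw [addOrDrop_n_lt h1, addOrDrop_n_lt h2, ← hc,
              Function.update_of_ne (hcj ▸ hij), Function.update_of_ne (hcj ▸ hij)]
            exact hn i hij
          · rw [addOrDrop_B_lt h1, addOrDrop_B_lt h2, ← hc, ← hcj,
              Function.update_self, Function.update_self, hcj, hBj]
            exact (Multiset.cons_swap d d₀ _)
          · rw [addOrDrop_n_lt h1, addOrDrop_n_lt h2, ← hc, ← hcj,
              Function.update_self, Function.update_self, hcj, hnj]
        · -- s₂ drops, s₁ adds: substitution
          refine ⟨?_, ?_, Or.inr (Or.inr ⟨s₁.B j, d, d₀, ?_, ?_, ?_⟩),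
            hcondT, hcondF⟩
          · intro i hij
            rw [addOrDrop_B_lt h1, addOrDrop_B_ge h2,
              Function.update_of_ne (hcj ▸ hij)]
            exact hB i hij
          · intro i hij
            rw [addOrDrop_n_lt h1, addOrDrop_n_ge h2,
              Function.update_of_ne (hcj ▸ hij)]
            exact hn i hij
          · rw [addOrDrop_B_lt h1, ← hcj, Function.update_self, hcj]
          · rw [addOrDrop_B_ge h2]; exact hBj
          · rw [addOrDrop_n_lt h1, addOrDrop_n_ge h2, ← hcj,
              Function.update_self, hcj, hnj]
      · -- s₁ full, hence s₂ full: both drop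
        have h2 : ¬ s₂.n s₂.c < v := by
          rw [← hc, hcj] at *; omega
        refine ⟨?_, ?_, Or.inr (Or.inl ⟨d₀, ?_, ?_⟩), hcondT, hcondF⟩
        · intro i hij
          rw [addOrDrop_B_ge h1, addOrDrop_B_ge h2]; exact hB i hij
        · intro i hij
          rw [addOrDrop_n_ge h1, addOrDrop_n_ge h2]; exact hn i hij
        · rw [addOrDrop_B_ge h1, addOrDrop_B_ge h2]; exact hBj
        · rw [addOrDrop_n_ge h1, addOrDrop_n_ge h2]; exact hnj
    · -- substitution case: both act identically
      have hnn : s₁.n s₁.c = s₂.n s₂.c := by rw [← hc, hcj]; exact hn12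
      by_cases h1 : s₁.n s₁.c < v
      · have h2 : s₂.n s₂.c < v := hnn ▸ h1
        refine ⟨?_, ?_, Or.inr (Or.inr ⟨d ::ₘ B, d₁, d₂, ?_, ?_, ?_⟩),
          hcondT, hcondF⟩
        · intro i hij
          rw [addOrDrop_B_lt h1, addOrDrop_B_lt h2, ← hc,
            Function.update_of_ne (hcj ▸ hij), Function.update_of_ne (hcj ▸ hij)]
          exact hB i hij
        · intro i hij
          rw [addOrDrop_n_lt h1, addOrDrop_n_lt h2, ← hc,
            Function.update_of_ne (hcj ▸ hij), Function.update_of_ne (hcj ▸ hij)]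
          exact hn i hij
        · rw [addOrDrop_B_lt h1, ← hcj, Function.update_self, hcj, hB1]
          exact Multiset.cons_swap d d₁ B
        · rw [addOrDrop_B_lt h2, ← hc, ← hcj, Function.update_self, hcj, hB2]
          exact Multiset.cons_swap d d₂ B
        · rw [addOrDrop_n_lt h1, addOrDrop_n_lt h2, ← hc, ← hcj,
            Function.update_self, Function.update_self, hcj, hn12]
      · have h2 : ¬ s₂.n s₂.c < v := hnn ▸ h1
        refine ⟨?_, ?_, Or.inr (Or.inr ⟨B, d₁, d₂, ?_, ?_, ?_⟩),
          hcondT, hcondF⟩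
        · intro i hij
          rw [addOrDrop_B_ge h1, addOrDrop_B_ge h2]; exact hB i hij
        · intro i hij
          rw [addOrDrop_n_ge h1, addOrDrop_n_ge h2]; exact hn i hij
        · rw [addOrDrop_B_ge h1]; exact hB1
        · rw [addOrDrop_B_ge h2]; exact hB2
        · rw [addOrDrop_n_ge h1, addOrDrop_n_ge h2]; exact hn12
  · -- the current slot is not the differing slot: identical action
    have hnn : s₁.n s₁.c = s₂.n s₂.c := by rw [hc]; exact hn _ (hc ▸ hcj)
    have hBB : s₁.B s₁.c = s₂.B s₂.c := by rw [hc]; exact hB _ (hc ▸ hcj)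
    by_cases h1 : s₁.n s₁.c < v
    · have h2 : s₂.n s₂.c < v := hnn ▸ h1
      refine ⟨?_, ?_, ?_, hcondT, hcondF⟩
      · intro i hij
        have hBB' : s₁.B s₁.c = s₂.B s₁.c := by rw [hBB, ← hc]
        rw [addOrDrop_B_lt h1, addOrDrop_B_lt h2, ← hc, Function.update_apply,
          Function.update_apply]
        split_ifs with hh
        · rw [hBB']
        · exact hB i hij
      · intro i hij
        have hnn' : s₁.n s₁.c = s₂.n s₁.c := by rw [hnn, ← hc]
        rw [addOrDrop_n_lt h1, addOrDrop_n_lt h2, ← hc, Function.update_apply,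
          Function.update_apply]
        split_ifs with hh
        · rw [hnn']
        · exact hn i hij
      · rw [SlotDiff, addOrDrop_B_lt h1, addOrDrop_B_lt h2, addOrDrop_n_lt h1,
          addOrDrop_n_lt h2, ← hc, Function.update_of_ne (Ne.symm hcj),
          Function.update_of_ne (Ne.symm hcj), Function.update_of_ne (Ne.symm hcj),
          Function.update_of_ne (Ne.symm hcj)]
        exact hsd
    · have h2 : ¬ s₂.n s₂.c < v := hnn ▸ h1
      refine ⟨?_, ?_, ?_, hcondT, hcondF⟩
      · intro i hij
        rw [addOrDrop_B_ge h1, addOrDrop_B_ge h2]; exact hB i hij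
      · intro i hij
        rw [addOrDrop_n_ge h1, addOrDrop_n_ge h2]; exact hn i hij
      · rw [SlotDiff, addOrDrop_B_ge h1, addOrDrop_B_ge h2, addOrDrop_n_ge h1,
          addOrDrop_n_ge h2]
        exact hsd

end

section
variable {D Q R : Type} {t : ℕ} [NeZero t] {v : ℕ} {κ : Q → SanFn D R}

lemma drel_answer {m : ℕ} {s₁ s₂ : ExState D Q R t} (h : DRel m s₁ s₂)
    (hpc : s₁.pc16 = false) (q : Q) (r' : R) :
    DRel (m - 1) (answerState s₁ q r') (answerState s₂ q r') := by
  obtain ⟨hpc12, hc, hr, j, hB, hn, hsd, hT, hF⟩ := h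
  obtain ⟨hj, hm1, hmt⟩ := hF hpc
  obtain ⟨m', rfl⟩ : ∃ m', m = m' + 1 := ⟨m - 1, by omega⟩
  refine ⟨rfl, hc, rfl, j, hB, hn, hsd, ?_, ?_⟩
  · intro _
    refine ⟨?_, by omega⟩
    show j = s₁.c + 1 + ((m' + 1 - 1 : ℕ) : Fin t)
    rw [hj]
    simp only [Nat.add_sub_cancel]
    push_cast
    ring
  · intro hh; exact absurd hh (by simp [answerState])

lemma drel_advance0 {s₁ s₂ : ExState D Q R t} (h : DRel 0 s₁ s₂)
    (hpc : s₁.pc16 = true) : coreEq (advanceState s₁) (advanceState s₂) := by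
  obtain ⟨hpc12, hc, hr, j, hB, hn, hsd, hT, hF⟩ := h
  obtain ⟨hj, -⟩ := hT hpc
  rw [Nat.cast_zero, add_zero] at hj
  refine ⟨rfl, ?_, ?_, by simp [advanceState, hc], hr⟩
  · funext i
    simp only [advanceState]
    rw [hc, Function.update_apply, Function.update_apply]
    split_ifs with hh
    · rfl
    · exact hB i (fun he => hh (by rw [he, hj, hc]))
  · funext i
    simp only [advanceState]
    rw [hc, Function.update_apply, Function.update_apply]
    split_ifs with hh
    · rfl
    · exact hn i (fun he => hh (by rw [he, hj, hc]))

lemma drel_advanceS {m : ℕ} {s₁ s₂ : ExState D Q R t} (h : DRel m s₁ s₂)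
    (hm : m ≠ 0) (hpc : s₁.pc16 = true) :
    DRel m (advanceState s₁) (advanceState s₂) := by
  obtain ⟨hpc12, hc, hr, j, hB, hn, hsd, hT, hF⟩ := h
  obtain ⟨hj, hmt⟩ := hT hpc
  have hjc : j ≠ s₁.c + 1 := by
    rw [hj]
    intro hh
    have : ((m : ℕ) : Fin t) = 0 := by
      rwa [add_eq_left] at hh
    exact Fin.natCast_ne_zero (by omega) (by omega) this
  refine ⟨rfl, by simp [advanceState, hc], hr, j, ?_, ?_, ?_, ?_, ?_⟩
  · intro i hij
    simp only [advanceState]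
    rw [hc, Function.update_apply, Function.update_apply]
    split_ifs with hh
    · rfl
    · exact hB i hij
  · intro i hij
    simp only [advanceState]
    rw [hc, Function.update_apply, Function.update_apply]
    split_ifs with hh
    · rfl
    · exact hn i hij
  · show SlotDiff (advanceState s₁) (advanceState s₂) j
    have hjc2 : j ≠ s₂.c + 1 := by rw [← hc]; exact hjc
    have e1 : (advanceState s₁).B j = s₁.B j := Function.update_of_ne hjc _ _
    have e2 : (advanceState s₂).B j = s₂.B j := Function.update_of_ne hjc2 _ _
    have e3 : (advanceState s₁).n j = s₁.n j := Function.update_of_ne hjc _ _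
    have e4 : (advanceState s₂).n j = s₂.n j := Function.update_of_ne hjc2 _ _
    unfold SlotDiff
    rw [e1, e2, e3, e4]
    exact hsd
  · intro hh; exact absurd hh (by simp [advanceState])
  · intro _
    refine ⟨?_, by omega, by omega⟩
    show j = s₁.c + 1 + (m : Fin t)
    exact hj

/-- Setting up the relation when the extra data point is first received. -/
lemma drel_add_self {s : ExState D Q R t} (hpc : s.pc16 = false)
    (hlt : s.n s.c < v) (d : D) :
    DRel t (addOrDrop v s d) s ∧ DRel t s (addOrDrop v s d) := by
  have hcast : ((t : ℕ) : Fin t) = 0 := by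
    ext
    rw [Fin.val_natCast]
    simp
  have ht1 : 1 ≤ t := Nat.one_le_iff_ne_zero.mpr (NeZero.ne t)
  constructor
  · refine ⟨by rw [addOrDrop_pc16, hpc], addOrDrop_c s d, addOrDrop_r s d, s.c, ?_, ?_,
      Or.inl ⟨d, ?_, ?_⟩, ?_, ?_⟩
    · intro i hij
      rw [addOrDrop_B_lt hlt, Function.update_of_ne hij]
    · intro i hij
      rw [addOrDrop_n_lt hlt, Function.update_of_ne hij]
    · rw [addOrDrop_B_lt hlt, Function.update_self]
    · rw [addOrDrop_n_lt hlt, Function.update_self]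
    · intro hh; rw [addOrDrop_pc16] at hh; exact absurd hh (by simp)
    · intro _
      exact ⟨by rw [addOrDrop_c, hcast, add_zero], ht1, le_refl t⟩
  · refine ⟨by rw [addOrDrop_pc16, hpc], (addOrDrop_c s d).symm, (addOrDrop_r s d).symm,
      s.c, ?_, ?_, Or.inr (Or.inl ⟨d, ?_, ?_⟩), ?_, ?_⟩
    · intro i hij
      rw [addOrDrop_B_lt hlt, Function.update_of_ne hij]
    · intro i hij
      rw [addOrDrop_n_lt hlt, Function.update_of_ne hij]
    · rw [addOrDrop_B_lt hlt, Function.update_self]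
    · rw [addOrDrop_n_lt hlt, Function.update_self]
    · intro hh; rw [hpc] at hh; exact absurd hh (by simp)
    · intro _
      exact ⟨by rw [hcast, add_zero], ht1, le_refl t⟩

/-- When the current slot is full, the extra data point is simply dropped. -/
lemma drop_coreEq {s : ExState D Q R t} (hpc : s.pc16 = false) (hge : ¬ s.n s.c < v)
    (d : D) : coreEq (addOrDrop v s d) s :=
  ⟨by rw [addOrDrop_pc16, hpc], addOrDrop_B_ge hge d, addOrDrop_n_ge hge d,
    addOrDrop_c s d, addOrDrop_r s d⟩

/-- The total data sets of related states are close. -/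
lemma drel_dp_bound {m : ℕ} {s₁ s₂ : ExState D Q R t} (h : DRel m s₁ s₂)
    {ε : ℝ} (hε : 0 ≤ ε) {k : SanFn D R} (hk : HasDP ε k) (r : R) :
    k.f (totalB s₁) r ≤ Real.exp (2 * ε) * k.f (totalB s₂) r := by
  obtain ⟨hpc12, hc, hr, j, hB, hn, hsd, hT, hF⟩ := h
  have htot : ∀ s : ExState D Q R t, totalB s = s.B j + ∑ i ∈ Finset.univ.erase j, s.B i :=
    fun s => (Finset.add_sum_erase _ _ (Finset.mem_univ j)).symm
  have hrest : ∑ i ∈ Finset.univ.erase j, s₁.B i = ∑ i ∈ Finset.univ.erase j, s₂.B i :=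
    Finset.sum_congr rfl fun i hi => hB i (Finset.ne_of_mem_erase hi)
  have he2 : Real.exp ε ≤ Real.exp (2 * ε) := Real.exp_le_exp.mpr (by linarith)
  rcases hsd with ⟨d₀, hBj, -⟩ | ⟨d₀, hBj, -⟩ | ⟨B, d₁, d₂, hB1, hB2, -⟩
  · have : totalB s₁ = d₀ ::ₘ totalB s₂ := by
      rw [htot s₁, htot s₂, hrest, hBj, Multiset.cons_add]
    have hdp := hk (totalB s₁) (totalB s₂) (Or.inr ⟨d₀, Or.inr this.symm⟩) r
    calc k.f (totalB s₁) r ≤ Real.exp ε * k.f (totalB s₂) r := hdp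
      _ ≤ Real.exp (2 * ε) * k.f (totalB s₂) r :=
        mul_le_mul_of_nonneg_right he2 (k.nonneg _ _)
  · have : totalB s₂ = d₀ ::ₘ totalB s₁ := by
      rw [htot s₁, htot s₂, hrest, hBj, Multiset.cons_add]
    have hdp := hk (totalB s₁) (totalB s₂) (Or.inr ⟨d₀, Or.inl this.symm⟩) r
    calc k.f (totalB s₁) r ≤ Real.exp ε * k.f (totalB s₂) r := hdp
      _ ≤ Real.exp (2 * ε) * k.f (totalB s₂) r :=
        mul_le_mul_of_nonneg_right he2 (k.nonneg _ _)
  · set T := B + ∑ i ∈ Finset.univ.erase j, s₂.B i with hT'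
    have h1 : totalB s₁ = d₁ ::ₘ T := by
      rw [htot s₁, hrest, hB1, Multiset.cons_add, hT']
    have h2 : totalB s₂ = d₂ ::ₘ T := by
      rw [htot s₂, hB2, Multiset.cons_add, hT']
    have hdp1 := hk (totalB s₁) T (Or.inr ⟨d₁, Or.inr h1.symm⟩) r
    have hdp2 := hk T (totalB s₂) (Or.inr ⟨d₂, Or.inl h2.symm⟩) r
    calc k.f (totalB s₁) r ≤ Real.exp ε * k.f T r := hdp1
      _ ≤ Real.exp ε * (Real.exp ε * k.f (totalB s₂) r) :=
        mul_le_mul_of_nonneg_left hdp2 (Real.exp_pos ε).le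
      _ = Real.exp (2 * ε) * k.f (totalB s₂) r := by
        rw [← mul_assoc, ← Real.exp_add]; ring_nf

end

section
variable {D Q R : Type} {t : ℕ} [NeZero t] {v : ℕ} {κ : Q → SanFn D R}

lemma drel_le {ε : ℝ} (hε : 0 ≤ ε) (hκ : ∀ q : Q, HasDP ε (κ q)) :
    ∀ (N : ℕ) (i : List (D ⊕ Q)) (e : List (Q ⊕ R)), i.length + e.length ≤ N →
    ∀ (s₁ s₂ : ExState D Q R t) (m : ℕ), DRel m s₁ s₂ →
    exP v κ s₁ i e ≤ Real.exp (2 * m * ε) * exP v κ s₂ i e := by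
  have hexp1 : ∀ m : ℕ, (1 : ℝ) ≤ Real.exp (2 * m * ε) := fun m =>
    Real.one_le_exp_iff.mpr (by positivity)
  intro N
  induction N with
  | zero =>
    intro i e hlen s₁ s₂ m h
    obtain rfl : e = [] := by cases e with
      | nil => rfl
      | cons a b => simp at hlen
    rw [exP_nil, exP_nil, mul_one]
    exact hexp1 m
  | succ n ih =>
    intro i e hlen s₁ s₂ m h
    have hpc2 := h.1
    have hc := h.2.1
    have hr := h.2.2.1
    cases e with
    | nil =>
      rw [exP_nil, exP_nil, mul_one]
      exact hexp1 m
    | cons x e' =>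
      cases hpc : s₁.pc16 with
      | true =>
        cases x with
        | inl q' =>
          rw [exP_true_inl v κ s₁ hpc, exP_true_inl v κ s₂ (hpc2 ▸ hpc), mul_zero]
        | inr r' =>
          rw [exP_true_inr v κ s₁ hpc, exP_true_inr v κ s₂ (hpc2 ▸ hpc), ← hr]
          split
          · rcases Nat.eq_zero_or_pos m with rfl | hm
            · rw [exP_coreEq (i.length + e'.length) i e' le_rfl _ _ (drel_advance0 h hpc)]
              push_cast
              rw [mul_zero, zero_mul, Real.exp_zero, one_mul]
            · exact ih i e' (by simp at hlen ⊢; omega) _ _ m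
                (drel_advanceS h (by omega) hpc)
          · rw [mul_zero]
      | false =>
        cases i with
        | nil =>
          rw [exP_false_nilin v κ s₁ hpc, exP_false_nilin v κ s₂ (hpc2 ▸ hpc), mul_zero]
        | cons y i' =>
          cases y with
          | inl d =>
            rw [exP_false_inl v κ s₁ hpc, exP_false_inl v κ s₂ (hpc2 ▸ hpc)]
            exact ih i' (x :: e') (by simp at hlen ⊢; omega) _ _ m
              (drel_addOrDrop h hpc d)
          | inr q =>
            cases x with
            | inr r' =>
              rw [exP_false_inrr v κ s₁ hpc, exP_false_inrr v κ s₂ (hpc2 ▸ hpc), mul_zero]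
            | inl q' =>
              rw [exP_false_inrq v κ s₁ hpc, exP_false_inrq v κ s₂ (hpc2 ▸ hpc)]
              split
              · -- the interesting query case
                obtain ⟨-, hm1, -⟩ := h.2.2.2.choose_spec.2.2.2.2 hpc
                have hterm : ∀ r' : R,
                    (κ q).f (totalB s₁) r' * exP v κ (answerState s₁ q r') i' e'
                    ≤ Real.exp (2 * m * ε) *
                      ((κ q).f (totalB s₂) r' * exP v κ (answerState s₂ q r') i' e') := by
                  intro r'
                  have h1 := drel_dp_bound h hε (hκ q) r'
                  have h2 := ih i' e' (by simp at hlen ⊢; omega) _ _ (m - 1)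
                    (drel_answer h hpc q r')
                  calc (κ q).f (totalB s₁) r' * exP v κ (answerState s₁ q r') i' e'
                      ≤ (Real.exp (2 * ε) * (κ q).f (totalB s₂) r') *
                        (Real.exp (2 * (m - 1 : ℕ) * ε) * exP v κ (answerState s₂ q r') i' e') := by
                        apply mul_le_mul h1 h2
                          (exP_nonneg (i'.length + e'.length) i' e' le_rfl _)
                          (mul_nonneg (Real.exp_pos _).le ((κ q).nonneg _ _))
                    _ = (Real.exp (2 * ε) * Real.exp (2 * (m - 1 : ℕ) * ε)) *
                        ((κ q).f (totalB s₂) r' * exP v κ (answerState s₂ q r') i' e') := by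
                        ring
                    _ = Real.exp (2 * m * ε) *
                        ((κ q).f (totalB s₂) r' * exP v κ (answerState s₂ q r') i' e') := by
                        rw [← Real.exp_add]
                        congr 1
                        have : ((m - 1 : ℕ) : ℝ) = (m : ℝ) - 1 := by
                          push_cast [Nat.cast_sub hm1]; ring
                        rw [this]; ring
                refine le_trans (Summable.tsum_le_tsum hterm (summable_mul _ _ _ _ _)
                  ((summable_mul (κ q) (totalB s₂) _ i' e').mul_left _)) ?_
                rw [tsum_mul_left]
              · rw [mul_zero]

end

section
variable {D Q R : Type} {t : ℕ} [NeZero t] {v : ℕ} {κ : Q → SanFn D R}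

lemma coreEq_symm {s₁ s₂ : ExState D Q R t} (h : coreEq s₁ s₂) : coreEq s₂ s₁ :=
  ⟨h.1.symm, h.2.1.symm, h.2.2.1.symm, h.2.2.2.1.symm, h.2.2.2.2.symm⟩

lemma ins_le {ε : ℝ} (hε : 0 ≤ ε) (hκ : ∀ q : Q, HasDP ε (κ q)) (d : D) :
    ∀ (N : ℕ) (pre post : List (D ⊕ Q)) (e : List (Q ⊕ R)), pre.length + e.length ≤ N →
    ∀ s : ExState D Q R t,
      exP v κ s (pre ++ Sum.inl d :: post) e
        ≤ Real.exp (2 * t * ε) * exP v κ s (pre ++ post) e ∧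
      exP v κ s (pre ++ post) e
        ≤ Real.exp (2 * t * ε) * exP v κ s (pre ++ Sum.inl d :: post) e := by
  have hexp1 : (1 : ℝ) ≤ Real.exp (2 * t * ε) :=
    Real.one_le_exp_iff.mpr (by positivity)
  intro N
  induction N with
  | zero =>
    intro pre post e hlen s
    obtain rfl : e = [] := by cases e with
      | nil => rfl
      | cons a b => simp at hlen
    rw [exP_nil, exP_nil, mul_one]
    exact ⟨hexp1, hexp1⟩
  | succ n ih =>
    intro pre post e hlen s
    cases e with
    | nil =>
      rw [exP_nil, exP_nil, mul_one]
      exact ⟨hexp1, hexp1⟩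
    | cons x e' =>
      cases hpc : s.pc16 with
      | true =>
        cases x with
        | inl q' =>
          simp only [exP_true_inl v κ s hpc, mul_zero]
          exact ⟨le_rfl, le_rfl⟩
        | inr r' =>
          rw [exP_true_inr v κ s hpc, exP_true_inr v κ s hpc]
          split
          · exact ih pre post e' (by simp at hlen ⊢; omega) (advanceState s)
          · rw [mul_zero]; exact ⟨le_rfl, le_rfl⟩
      | false =>
        cases pre with
        | nil =>
          simp only [List.nil_append]
          rw [exP_false_inl v κ s hpc]
          by_cases hlt : s.n s.c < v
          · obtain ⟨hd1, hd2⟩ := drel_add_self (v := v) hpc hlt d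
            constructor
            · have := drel_le (v := v) hε hκ (post.length + (x :: e').length) post (x :: e')
                le_rfl _ _ t hd1
              exact_mod_cast this
            · have := drel_le (v := v) hε hκ (post.length + (x :: e').length) post (x :: e')
                le_rfl _ _ t hd2
              exact_mod_cast this
          · have hce := drop_coreEq (v := v) hpc hlt d
            have heq := exP_coreEq (v := v) (κ := κ) (post.length + (x :: e').length)
              post (x :: e') le_rfl _ _ hce
            rw [heq]
            constructor
            · exact le_mul_of_one_le_left
                (exP_nonneg (post.length + (x :: e').length) post (x :: e') le_rfl s) hexp1
            · exact le_mul_of_one_le_left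
                (exP_nonneg (post.length + (x :: e').length) post (x :: e') le_rfl s) hexp1
        | cons y pre' =>
          simp only [List.cons_append]
          cases y with
          | inl d' =>
            rw [exP_false_inl v κ s hpc, exP_false_inl v κ s hpc]
            exact ih pre' post (x :: e') (by simp at hlen ⊢; omega) (addOrDrop v s d')
          | inr q =>
            cases x with
            | inr r' =>
              simp only [exP_false_inrr v κ s hpc, mul_zero]
              exact ⟨le_rfl, le_rfl⟩
            | inl q' =>
              rw [exP_false_inrq v κ s hpc, exP_false_inrq v κ s hpc]
              split
              · have hih := fun r' : R =>
                  ih pre' post e' (by simp at hlen ⊢; omega) (answerState s q r')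
                constructor
                · refine le_trans (Summable.tsum_le_tsum (f := fun r' : R =>
                      (κ q).f (totalB s) r' * exP v κ (answerState s q r') (pre' ++ Sum.inl d :: post) e')
                      (g := fun r' : R => Real.exp (2 * t * ε) * ((κ q).f (totalB s) r'
                        * exP v κ (answerState s q r') (pre' ++ post) e'))
                      (fun r' => ?_) (summable_mul _ _ _ _ _)
                      ((summable_mul (κ q) (totalB s) _ _ _).mul_left _)) ?_
                  · calc (κ q).f (totalB s) r' * exP v κ (answerState s q r') (pre' ++ Sum.inl d :: post) e'
                        ≤ (κ q).f (totalB s) r' * (Real.exp (2 * t * ε)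
                          * exP v κ (answerState s q r') (pre' ++ post) e') :=
                        mul_le_mul_of_nonneg_left (hih r').1 ((κ q).nonneg _ _)
                      _ = Real.exp (2 * t * ε) * ((κ q).f (totalB s) r'
                          * exP v κ (answerState s q r') (pre' ++ post) e') := by ring
                  · rw [tsum_mul_left]
                · refine le_trans (Summable.tsum_le_tsum (f := fun r' : R =>
                      (κ q).f (totalB s) r' * exP v κ (answerState s q r') (pre' ++ post) e')
                      (g := fun r' : R => Real.exp (2 * t * ε) * ((κ q).f (totalB s) r'
                        * exP v κ (answerState s q r') (pre' ++ Sum.inl d :: post) e'))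
                      (fun r' => ?_) (summable_mul _ _ _ _ _)
                      ((summable_mul (κ q) (totalB s) _ _ _).mul_left _)) ?_
                  · calc (κ q).f (totalB s) r' * exP v κ (answerState s q r') (pre' ++ post) e'
                        ≤ (κ q).f (totalB s) r' * (Real.exp (2 * t * ε)
                          * exP v κ (answerState s q r') (pre' ++ Sum.inl d :: post) e') :=
                        mul_le_mul_of_nonneg_left (hih r').2 ((κ q).nonneg _ _)
                      _ = Real.exp (2 * t * ε) * ((κ q).f (totalB s) r'
                          * exP v κ (answerState s q r') (pre' ++ Sum.inl d :: post) e') := by ring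
                  · rw [tsum_mul_left]
              · rw [mul_zero]; exact ⟨le_rfl, le_rfl⟩

lemma summable_minPref (s : ExState D Q R t) (i : List (D ⊕ Q)) (T : Set (List (Q ⊕ R))) :
    Summable (fun e : minimalPrefixes T => exP v κ s i e.1) := by
  apply summable_of_sum_le (c := 1)
  · intro e
    exact exP_nonneg (i.length + e.1.length) i e.1 le_rfl s
  · intro u
    rw [show (∑ x ∈ u, exP v κ s i x.1)
        = ∑ e ∈ u.image Subtype.val, exP v κ s i e from
      (Finset.sum_image (fun x _ y _ h => Subtype.ext h)).symm]
    apply pf_sum_le_one (v := v) (κ := κ)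
      (i.length + ∑ e ∈ u.image Subtype.val, e.length) i _ le_rfl
    intro e₁ he₁ e₂ he₂ hpre
    obtain ⟨⟨e₁', he₁m⟩, -, rfl⟩ := Finset.mem_image.mp he₁
    obtain ⟨⟨e₂', he₂m⟩, -, rfl⟩ := Finset.mem_image.mp he₂
    by_contra hne
    exact he₂m.2 ⟨e₁', he₁m.1, hpre, hne⟩

end

/-- if every sanitization function used by `M_ex1(K)` has
`ε`-differential privacy, then `M_ex1(K)` has `(2·t·ε)`-differential noninterference. -/
theorem stmt14 [Countable D] [Countable Q] [Countable R]
    (t : ℕ) [NeZero t] (v : ℕ) (hv : 0 < v) (ε : ℝ) (hε : 0 ≤ ε)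
    (κ : Q → SanFn D R) (hκ : ∀ q : Q, HasDP ε (κ q))
    (y₀ : D ⊕ Q) (r₀ : R) (k₀ : Q)
    (i₁ i₂ : List (D ⊕ Q)) (hadj : AdjOneIn i₁ i₂) (T : Set (List (Q ⊕ R))) :
    exPSet v κ (initState (t := t) y₀ r₀ k₀) i₁ T
      ≤ Real.exp (2 * t * ε) * exPSet v κ (initState (t := t) y₀ r₀ k₀) i₂ T := by
  have hterm : ∀ e : minimalPrefixes T,
      exP v κ (initState (t := t) y₀ r₀ k₀) i₁ e.1
        ≤ Real.exp (2 * t * ε) * exP v κ (initState (t := t) y₀ r₀ k₀) i₂ e.1 := by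
    intro e
    rcases hadj with rfl | ⟨pre, post, d, ⟨h1, h2⟩ | ⟨h1, h2⟩⟩
    · exact le_mul_of_one_le_left (exP_nonneg (i₁.length + e.1.length) _ _ le_rfl _)
        (Real.one_le_exp_iff.mpr (mul_nonneg (by positivity) hε))
    · subst h1; subst h2
      exact (ins_le hε hκ d (pre.length + e.1.length) pre post e.1 le_rfl _).1
    · subst h1; subst h2
      exact (ins_le hε hκ d (pre.length + e.1.length) pre post e.1 le_rfl _).2
  unfold exPSet
  refine le_trans (Summable.tsum_le_tsum hterm (summable_minPref _ _ _)
    ((summable_minPref _ _ _).mul_left _)) ?_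
  rw [tsum_mul_left]
end

section
/- For all integers m > 0, all ε > 0, and all functions f from finite multisets over D to {−m,…,m} with positive sensitivity δ(f), the truncated geometric mechanism κ_{f,ε} has ε-differential privacy: for all multisets B₁ and B₂ differing on at most one element and all integers r, Pr[κ_{f,ε}(B₁) = r] ≤ e^ε · Pr[κ_{f,ε}(B₂) = r]. -/
/-- The probability mass function of the truncated geometric noise distribution
`N(m, t, p)` at `n`. -/
noncomputable def trGeoPMF (m t : ℤ) (p : ℝ) (n : ℤ) : ℝ :=
  if |t + n| = m then p ^ n.natAbs * (1 / (1 + p))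
  else if -m < t + n ∧ t + n < m then p ^ n.natAbs * ((1 - p) / (1 + p))
  else 0

lemma key_pow (ε : ℝ) (hε : 0 < ε) (Δ : ℤ) (hΔ : 0 < Δ) (a b : ℕ)
    (hab : (b : ℤ) ≤ (a : ℤ) + Δ) :
    Real.exp (-ε / (Δ : ℝ)) ^ a ≤ Real.exp ε * Real.exp (-ε / (Δ : ℝ)) ^ b := by
  have hΔ' : (0 : ℝ) < (Δ : ℝ) := by exact_mod_cast hΔ
  rw [← Real.exp_nat_mul, ← Real.exp_nat_mul, ← Real.exp_add, Real.exp_le_exp]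
  rw [div_eq_mul_inv]
  have hb : (b : ℝ) ≤ (a : ℝ) + (Δ : ℝ) := by exact_mod_cast hab
  have h1 : (a : ℝ) * (-ε * (Δ : ℝ)⁻¹) = -(ε * ((a : ℝ) / Δ)) := by ring
  have h2 : ε + (b : ℝ) * (-ε * (Δ : ℝ)⁻¹) = ε * (1 - (b : ℝ) / Δ) := by
    field_simp; ring
  rw [h1, h2]
  have : -((a : ℝ) / Δ) ≤ 1 - (b : ℝ) / Δ := by
    rw [neg_le, neg_sub, div_sub_one hΔ'.ne', div_le_div_iff₀ hΔ' hΔ']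
    nlinarith
  nlinarith

/-- the truncated geometric mechanism `κ_{f,ε}` has `ε`-differential
privacy: `Pr[κ_{f,ε}(B₁) = r] ≤ e^ε · Pr[κ_{f,ε}(B₂) = r]`, where
`Pr[κ_{f,ε}(B) = r] = Pr[N(m, f(B), e^{-ε/δ(f)}) = r - f(B)]`. -/
theorem stmt15 {D : Type} [Countable D] (m : ℤ) (hm : 0 < m) (ε : ℝ) (hε : 0 < ε)
    (f : Multiset D → ℤ) (hf : ∀ B, -m ≤ f B ∧ f B ≤ m)
    (Δ : ℤ) (hΔ : 0 < Δ)
    (hsens : ∀ B₁ B₂ : Multiset D, MSAdj B₁ B₂ → |f B₁ - f B₂| ≤ Δ)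
    (B₁ B₂ : Multiset D) (hadj : MSAdj B₁ B₂) (r : ℤ) :
    trGeoPMF m (f B₁) (Real.exp (-ε / (Δ : ℝ))) (r - f B₁)
      ≤ Real.exp ε * trGeoPMF m (f B₂) (Real.exp (-ε / (Δ : ℝ))) (r - f B₂) := by
  set p := Real.exp (-ε / (Δ : ℝ)) with hp
  have hΔ' : (0 : ℝ) < (Δ : ℝ) := by exact_mod_cast hΔ
  have hp0 : 0 < p := Real.exp_pos _
  have hp1 : p < 1 := by
    rw [hp, Real.exp_lt_one_iff]
    exact div_neg_of_neg_of_pos (neg_neg_of_pos hε) hΔ'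
  have hab : ((r - f B₂).natAbs : ℤ) ≤ ((r - f B₁).natAbs : ℤ) + Δ := by
    have h := hsens B₁ B₂ hadj
    rw [← Int.abs_eq_natAbs, ← Int.abs_eq_natAbs]
    have h2 := abs_add_le (r - f B₁) (f B₁ - f B₂)
    rw [show r - f B₁ + (f B₁ - f B₂) = r - f B₂ by ring] at h2
    linarith
  have hkey : p ^ (r - f B₁).natAbs ≤ Real.exp ε * p ^ (r - f B₂).natAbs :=
    key_pow ε hε Δ hΔ _ _ hab
  unfold trGeoPMF
  rw [show f B₁ + (r - f B₁) = r by ring, show f B₂ + (r - f B₂) = r by ring]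
  split_ifs with h1 h2
  · have c1 : (0:ℝ) ≤ 1 / (1 + p) := by positivity
    calc p ^ (r - f B₁).natAbs * (1 / (1 + p))
        ≤ (Real.exp ε * p ^ (r - f B₂).natAbs) * (1 / (1 + p)) :=
          mul_le_mul_of_nonneg_right hkey c1
      _ = Real.exp ε * (p ^ (r - f B₂).natAbs * (1 / (1 + p))) := by ring
  · have c1 : (0:ℝ) ≤ (1 - p) / (1 + p) := by
      apply div_nonneg <;> nlinarith
    calc p ^ (r - f B₁).natAbs * ((1 - p) / (1 + p))
        ≤ (Real.exp ε * p ^ (r - f B₂).natAbs) * ((1 - p) / (1 + p)) :=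
          mul_le_mul_of_nonneg_right hkey c1
      _ = Real.exp ε * (p ^ (r - f B₂).natAbs * ((1 - p) / (1 + p))) := by ring
  · simp
end

section
/- For all integers m > 0, all ε > 0, all functions f from finite multisets over D to {−m,…,m} with positive sensitivity δ(f), all multisets B, and all integers b ≥ 0: Pr[|κ_{f,ε}(B) − f(B)| ≥ b] ≤ 2p^b/(1+p), where p = e^{−ε/δ(f)}. -/
lemma trGeoPMF_nonneg (m t : ℤ) (p : ℝ) (hp0 : 0 ≤ p) (hp1 : p ≤ 1) (n : ℤ) :
    0 ≤ trGeoPMF m t p n := by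
  unfold trGeoPMF
  have h1 : (0:ℝ) < 1 + p := by linarith
  have h2 : (0:ℝ) ≤ 1 - p := by linarith
  split_ifs <;> positivity

lemma tele (p : ℝ) (hp : 0 < 1 + p) (b M : ℕ) (hbM : b ≤ M) :
    (∑ k ∈ Finset.Ico b M, p ^ k * ((1 - p) / (1 + p))) + p ^ M * (1 / (1 + p))
      = p ^ b * (1 / (1 + p)) := by
  have h1 : ∑ k ∈ Finset.Ico b M, (p ^ k - p ^ (k+1)) = p ^ b - p ^ M := by
    rw [Finset.sum_Ico_eq_sub _ hbM, Finset.sum_range_sub' (fun i => p ^ i),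
        Finset.sum_range_sub' (fun i => p ^ i)]
    ring
  have h2 : ∀ k ∈ Finset.Ico b M, p ^ k * ((1 - p) / (1 + p))
      = (p ^ k - p ^ (k+1)) * (1 / (1 + p)) := by
    intro k _
    field_simp
    ring
  rw [Finset.sum_congr rfl h2, ← Finset.sum_mul, h1]
  ring

lemma pos_side (m t : ℤ) (hm : 0 < m) (htl : -m ≤ t) (p : ℝ)
    (hp0 : 0 < p) (hp1 : p < 1) (b : ℕ) (hb : 1 ≤ b) :
    ∑ n ∈ Finset.Icc (b : ℤ) (m - t), trGeoPMF m t p n ≤ p ^ b * (1 / (1 + p)) := by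
  rcases le_or_gt (b : ℤ) (m - t) with h | h
  · set M := (m - t).toNat with hMdef
    have hM : (M : ℤ) = m - t := Int.toNat_of_nonneg (by omega)
    have hbM : b ≤ M := by omega
    have hsum : ∑ n ∈ Finset.Icc (b : ℤ) (m - t), trGeoPMF m t p n
        = ∑ k ∈ Finset.Icc b M, trGeoPMF m t p (k : ℤ) := by
      apply Finset.sum_nbij' (i := Int.toNat) (j := fun k : ℕ => (k : ℤ))
      · simp only [Finset.mem_Icc]; intros; omega
      · simp only [Finset.mem_Icc]; intros; omega
      · simp only [Finset.mem_Icc]; intros; omega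
      · simp only [Finset.mem_Icc]; intros; omega
      · intro n hn
        simp only [Finset.mem_Icc] at hn
        rw [Int.toNat_of_nonneg (by omega)]
    rw [hsum]
    have hcong : ∑ k ∈ Finset.Icc b M, trGeoPMF m t p (k : ℤ)
        = (∑ k ∈ Finset.Ico b M, p ^ k * ((1 - p) / (1 + p))) + p ^ M * (1 / (1 + p)) := by
      rw [← Finset.Ico_add_one_right_eq_Icc, Finset.sum_Ico_succ_top (by omega)]
      congr 1
      · apply Finset.sum_congr rfl
        intro k hk
        simp only [Finset.mem_Ico] at hk
        unfold trGeoPMF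
        rw [if_neg, if_pos]
        · simp
        · omega
        · rw [abs_eq hm.le]; omega
      · unfold trGeoPMF
        rw [if_pos]
        · simp
        · rw [abs_eq hm.le]; omega
    rw [hcong, tele p (by linarith) b M hbM]
  · rw [Finset.Icc_eq_empty (by omega : ¬ (b:ℤ) ≤ m - t)]
    simp only [Finset.sum_empty]
    positivity

lemma trGeoPMF_neg (m t : ℤ) (p : ℝ) (n : ℤ) :
    trGeoPMF m t p (-n) = trGeoPMF m (-t) p n := by
  unfold trGeoPMF
  have h1 : t + -n = -(-t + n) := by ring
  rw [h1, abs_neg, Int.natAbs_neg]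
  simp only [show (-m < -(-t + n) ∧ -(-t + n) < m) ↔ (-m < -t + n ∧ -t + n < m) from by omega]

lemma neg_side (m t : ℤ) (hm : 0 < m) (htu : t ≤ m) (p : ℝ)
    (hp0 : 0 < p) (hp1 : p < 1) (b : ℕ) (hb : 1 ≤ b) :
    ∑ n ∈ Finset.Icc (-m - t) (-(b : ℤ)), trGeoPMF m t p n ≤ p ^ b * (1 / (1 + p)) := by
  have key : ∑ n ∈ Finset.Icc (-m - t) (-(b : ℤ)), trGeoPMF m t p n
      = ∑ n ∈ Finset.Icc (b : ℤ) (m - -t), trGeoPMF m (-t) p n := by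
    apply Finset.sum_nbij' (i := fun n : ℤ => -n) (j := fun n : ℤ => -n)
    · simp only [Finset.mem_Icc]; intros; omega
    · simp only [Finset.mem_Icc]; intros; omega
    · intros; ring
    · intros; ring
    · intro n hn
      rw [show n = -(-n) from by ring, trGeoPMF_neg]
      ring_nf
  rw [key]
  exact pos_side m (-t) hm (by omega) p hp0 hp1 b hb

lemma myTsumEq (m t : ℤ) (hm : 0 < m) (p : ℝ) (b : ℕ) :
    (∑' n : {n : ℤ // (b : ℤ) ≤ |n|}, trGeoPMF m t p n.1)
      = ∑ n ∈ (Finset.Icc (-m - t) (m - t)).filter (fun n => (b : ℤ) ≤ |n|),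
          trGeoPMF m t p n := by
  have h0 : (∑' n : {n : ℤ // (b : ℤ) ≤ |n|}, trGeoPMF m t p n.1)
      = ∑' n : ℤ, Set.indicator {n : ℤ | (b : ℤ) ≤ |n|} (trGeoPMF m t p) n :=
    tsum_subtype {n : ℤ | (b : ℤ) ≤ |n|} (trGeoPMF m t p)
  rw [h0]
  rw [tsum_eq_sum (s := (Finset.Icc (-m - t) (m - t)).filter (fun n => (b : ℤ) ≤ |n|))]
  · apply Finset.sum_congr rfl
    intro n hn
    simp only [Finset.mem_filter] at hn
    exact Set.indicator_of_mem (show n ∈ {n : ℤ | (b : ℤ) ≤ |n|} from hn.2) _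
  · intro n hn
    simp only [Finset.mem_filter, Finset.mem_Icc] at hn
    push_neg at hn
    by_cases hbn : (b : ℤ) ≤ |n|
    · rw [Set.indicator_of_mem (show n ∈ {n : ℤ | (b : ℤ) ≤ |n|} from hbn)]
      unfold trGeoPMF
      have hrange : ¬ (-m - t ≤ n ∧ n ≤ m - t) := fun hc => absurd hbn (not_le.mpr (hn hc))
      rw [if_neg, if_neg]
      · omega
      · rw [abs_eq hm.le]; omega
    · exact Set.indicator_of_notMem (show n ∉ {n : ℤ | (b : ℤ) ≤ |n|} from hbn) _

lemma final_ineq (p : ℝ) (hp0 : 0 < p) (hp1 : p < 1) (x : ℝ)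
    (hx : x ≤ (1 + p) * (1 / (1 + p))) : x ≤ 2 * p ^ 0 / (1 + p) := by
  have h1p : (0:ℝ) < 1 + p := by linarith
  have h1 : (1 + p) * (1 / (1 + p)) = 1 := by field_simp
  rw [h1] at hx
  rw [pow_zero, mul_one, le_div_iff₀ h1p]
  nlinarith


/-- Utility: `Pr[|κ_{f,ε}(B) − f(B)| ≥ b] ≤ 2p^b/(1+p)` where
`p = e^{−ε/δ(f)}` and `Pr[|κ_{f,ε}(B) − f(B)| ≥ b]` is the sum over all noise
values `n` with `|n| ≥ b` of `Pr[N(m, f(B), p) = n]`. -/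
theorem stmt16 {D : Type} [Countable D] (m : ℤ) (hm : 0 < m) (ε : ℝ) (hε : 0 < ε)
    (f : Multiset D → ℤ) (hf : ∀ B, -m ≤ f B ∧ f B ≤ m)
    (Δ : ℤ) (hΔ : 0 < Δ)
    (hsens : ∀ B₁ B₂ : Multiset D, MSAdj B₁ B₂ → |f B₁ - f B₂| ≤ Δ)
    (B : Multiset D) (b : ℕ) :
    (∑' n : {n : ℤ // (b : ℤ) ≤ |n|}, trGeoPMF m (f B) (Real.exp (-ε / (Δ : ℝ))) n.1)
      ≤ 2 * Real.exp (-ε / (Δ : ℝ)) ^ b / (1 + Real.exp (-ε / (Δ : ℝ))) := by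
  obtain ⟨htl, htu⟩ := hf B
  set t := f B with ht
  set p := Real.exp (-ε / (Δ : ℝ)) with hpdef
  have hp0 : 0 < p := Real.exp_pos _
  have hp1 : p < 1 := by
    rw [hpdef, Real.exp_lt_one_iff]
    apply div_neg_of_neg_of_pos (by linarith)
    exact_mod_cast hΔ
  have h1p : (0:ℝ) < 1 + p := by linarith
  have hnn : ∀ n : ℤ, 0 ≤ trGeoPMF m t p n :=
    trGeoPMF_nonneg m t p hp0.le hp1.le
  rw [myTsumEq m t hm p b]
  set S₀ := (Finset.Icc (-m - t) (m - t)).filter (fun n => (b : ℤ) ≤ |n|) with hS₀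
  rcases Nat.eq_zero_or_pos b with hb | hb
  · -- b = 0
    subst hb
    have hA := pos_side m t hm htl p hp0 hp1 1 le_rfl
    have hB := neg_side m t hm htu p hp0 hp1 1 le_rfl
    push_cast at hA hB
    set A := Finset.Icc (1:ℤ) (m - t) with hAdef
    set Bn := Finset.Icc (-m - t) (-1:ℤ) with hBdef
    have hsub : S₀ ⊆ insert 0 (A ∪ Bn) := by
      intro n hn
      simp only [hS₀, Finset.mem_filter, Finset.mem_Icc] at hn
      simp only [Finset.mem_insert, Finset.mem_union, hAdef, hBdef, Finset.mem_Icc]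
      omega
    have h0mem : (0:ℤ) ∉ A ∪ Bn := by
      simp only [Finset.mem_union, hAdef, hBdef, Finset.mem_Icc]
      omega
    have hUI := Finset.sum_union_inter (s₁ := A) (s₂ := Bn) (f := trGeoPMF m t p)
    have hInn : 0 ≤ ∑ n ∈ A ∩ Bn, trGeoPMF m t p n :=
      Finset.sum_nonneg fun n _ => hnn n
    have step1 : ∑ n ∈ S₀, trGeoPMF m t p n ≤ trGeoPMF m t p 0 +
        (∑ n ∈ A, trGeoPMF m t p n + ∑ n ∈ Bn, trGeoPMF m t p n) := by
      calc ∑ n ∈ S₀, trGeoPMF m t p n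
          ≤ ∑ n ∈ insert 0 (A ∪ Bn), trGeoPMF m t p n :=
            Finset.sum_le_sum_of_subset_of_nonneg hsub (fun i _ _ => hnn i)
        _ = trGeoPMF m t p 0 + ∑ n ∈ A ∪ Bn, trGeoPMF m t p n :=
            Finset.sum_insert h0mem
        _ ≤ _ := by linarith
    rcases eq_or_lt_of_le htu with htm | htm
    · -- t = m
      have hAempty : A = ∅ := Finset.Icc_eq_empty (by omega)
      have h0val : trGeoPMF m t p 0 = 1 / (1 + p) := by
        unfold trGeoPMF
        rw [if_pos (by rw [abs_eq hm.le]; omega)]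
        simp
      rw [hAempty, Finset.sum_empty] at step1
      rw [h0val] at step1
      apply final_ineq p hp0 hp1
      have e : (1 + p) * (1 / (1 + p)) = 1 / (1 + p) + (0 + p ^ 1 * (1 / (1 + p))) := by ring
      rw [e]; linarith
    rcases eq_or_lt_of_le htl with htm2 | htm2
    · -- t = -m
      have hBempty : Bn = ∅ := Finset.Icc_eq_empty (by omega)
      have h0val : trGeoPMF m t p 0 = 1 / (1 + p) := by
        unfold trGeoPMF
        rw [if_pos (by rw [abs_eq hm.le]; omega)]
        simp
      rw [hBempty, Finset.sum_empty] at step1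
      rw [h0val] at step1
      apply final_ineq p hp0 hp1
      have e : (1 + p) * (1 / (1 + p)) = 1 / (1 + p) + (p ^ 1 * (1 / (1 + p)) + 0) := by ring
      rw [e]; linarith
    · -- interior
      have h0val : trGeoPMF m t p 0 = (1 - p) / (1 + p) := by
        unfold trGeoPMF
        rw [if_neg (by rw [abs_eq hm.le]; omega), if_pos (by omega)]
        simp
      rw [h0val] at step1
      apply final_ineq p hp0 hp1
      have e : (1 + p) * (1 / (1 + p)) = (1 - p) / (1 + p) + (p ^ 1 * (1 / (1 + p)) + p ^ 1 * (1 / (1 + p))) := by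
        field_simp
        ring
      rw [e]; linarith
  · -- b ≥ 1
    have hA := pos_side m t hm htl p hp0 hp1 b hb
    have hB := neg_side m t hm htu p hp0 hp1 b hb
    set A := Finset.Icc ((b:ℤ)) (m - t) with hAdef
    set Bn := Finset.Icc (-m - t) (-(b:ℤ)) with hBdef
    have hsub : S₀ ⊆ A ∪ Bn := by
      intro n hn
      simp only [hS₀, Finset.mem_filter, Finset.mem_Icc] at hn
      simp only [Finset.mem_union, hAdef, hBdef, Finset.mem_Icc]
      rcases abs_cases n with ⟨h1, h2⟩ | ⟨h1, h2⟩ <;> omega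
    have hUI := Finset.sum_union_inter (s₁ := A) (s₂ := Bn) (f := trGeoPMF m t p)
    have hInn : 0 ≤ ∑ n ∈ A ∩ Bn, trGeoPMF m t p n :=
      Finset.sum_nonneg fun n _ => hnn n
    calc ∑ n ∈ S₀, trGeoPMF m t p n
        ≤ ∑ n ∈ A ∪ Bn, trGeoPMF m t p n :=
          Finset.sum_le_sum_of_subset_of_nonneg hsub (fun i _ _ => hnn i)
      _ ≤ ∑ n ∈ A, trGeoPMF m t p n + ∑ n ∈ Bn, trGeoPMF m t p n := by linarith
      _ ≤ p ^ b * (1 / (1 + p)) + p ^ b * (1 / (1 + p)) := add_le_add hA hB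
      _ = 2 * p ^ b / (1 + p) := by ring
end
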